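/- Let X be a real Banach space, 1 < α ≤ 2, M ≥ 1, ω ≥ 0, b ≥ 0. Let C : [0,∞) → L(X) be strongly continuous with ‖C(s)‖ ≤ M·e^(ωs)·E_α(b·s^α) for all s ≥ 0, and define T(t)x = ∫₀ᵗ ((t−s)^(α−2)/Γ(α−1)) C(s)x ds. Then ‖T(t)‖ ≤ M·e^(ωt)·t^(α−1)·E_{α,α}(b·t^α) for all t > 0. -/

import Mathlib

open MeasureTheory intervalIntegral Set Filter

/-- Real Beta integral, scaled. -/
lemma realBetaScaled {u v t : ℝ} (hu : 0 < u) (hv : 0 < v) (ht : 0 < t) :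
    ∫ s in (0:ℝ)..t, s ^ (u - 1) * (t - s) ^ (v - 1) =
      t ^ (u + v - 1) * (Real.Gamma u * Real.Gamma v / Real.Gamma (u + v)) := by
  have hΓ : (0:ℝ) < Real.Gamma (u + v) := Real.Gamma_pos_of_pos (by linarith)
  have h1 : Complex.Gamma u * Complex.Gamma v
      = Complex.Gamma ((u:ℂ) + v) * Complex.betaIntegral u v :=
    Complex.Gamma_mul_Gamma_eq_betaIntegral (by simpa using hu) (by simpa using hv)
  have hΓuv : Complex.Gamma ((u:ℂ) + v) = (Real.Gamma (u + v) : ℂ) := by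
    rw [← Complex.ofReal_add, Complex.Gamma_ofReal]
  have hB : Complex.betaIntegral u v
      = ((Real.Gamma u * Real.Gamma v / Real.Gamma (u + v) : ℝ) : ℂ) := by
    have hne : (Real.Gamma (u + v) : ℂ) ≠ 0 := by
      exact_mod_cast hΓ.ne'
    rw [Complex.ofReal_div, Complex.ofReal_mul, ← hΓuv, ← Complex.Gamma_ofReal,
      ← Complex.Gamma_ofReal, h1]
    exact (mul_div_cancel_left₀ _ (by rwa [hΓuv])).symm
  have h2 := Complex.betaIntegral_scaled (u : ℂ) (v : ℂ) ht
  have h3 : (∫ x in (0:ℝ)..t, (x : ℂ) ^ ((u:ℂ) - 1) * ((t : ℂ) - x) ^ ((v:ℂ) - 1))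
      = ((∫ s in (0:ℝ)..t, s ^ (u - 1) * (t - s) ^ (v - 1) : ℝ) : ℂ) := by
    rw [← intervalIntegral.integral_ofReal]
    apply intervalIntegral.integral_congr
    intro x hx
    rw [Set.uIcc_of_le ht.le] at hx
    have hx0 : (0:ℝ) ≤ x := hx.1
    have hx1 : (0:ℝ) ≤ t - x := by linarith [hx.2]
    simp only [Complex.ofReal_mul]
    rw [Complex.ofReal_cpow hx0, Complex.ofReal_cpow hx1]
    push_cast
    ring
  have h4 : ((t:ℂ)) ^ ((u:ℂ) + v - 1) = ((t ^ (u + v - 1) : ℝ) : ℂ) := by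
    rw [Complex.ofReal_cpow ht.le]
    push_cast
    ring_nf
  rw [h3, hB, h4] at h2
  exact_mod_cast h2

/-- Summability of Mittag-Leffler-type series. -/
lemma ml_summable {a β c : ℝ} (ha : 1 ≤ a) (hβ : 0 < β) (hc : 0 ≤ c) :
    Summable (fun k : ℕ => c ^ k / Real.Gamma ((k : ℝ) * a + β)) := by
  have hΓpos : ∀ k : ℕ, 0 < Real.Gamma ((k : ℝ) * a + β) := fun k =>
    Real.Gamma_pos_of_pos (by positivity)
  apply summable_of_ratio_norm_eventually_le (r := 1/2) (by norm_num)
  filter_upwards [eventually_ge_atTop ⌈max 1 (2 * c)⌉₊] with k hk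
  have hk' : max 1 (2 * c) ≤ (k : ℝ) := le_trans (Nat.le_ceil _) (by exact_mod_cast hk)
  set x := (k : ℝ) * a + β with hx
  have hx1 : (1:ℝ) ≤ x := by
    have : (1:ℝ) ≤ (k:ℝ) := le_trans (le_max_left _ _) hk'
    nlinarith
  have hx2c : 2 * c ≤ x := by
    have h1 : 2 * c ≤ (k:ℝ) := le_trans (le_max_right _ _) hk'
    nlinarith [hΓpos 0]
  have hxpos : 0 < x := by linarith
  have hmono : Real.Gamma (x + 1) ≤ Real.Gamma (x + a) := by
    rcases eq_or_lt_of_le ha with h | h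
    · rw [← h]
    · exact le_of_lt (Real.Gamma_strictMonoOn_Ici (by simp; linarith) (by simp; linarith)
        (by linarith))
  have hG1 : Real.Gamma (x + 1) = x * Real.Gamma x := Real.Gamma_add_one hxpos.ne'
  have hxk1 : ((k:ℝ) + 1) * a + β = x + a := by ring
  have hΓx : 0 < Real.Gamma x := Real.Gamma_pos_of_pos hxpos
  have hΓxa : 0 < Real.Gamma (x + a) := Real.Gamma_pos_of_pos (by linarith)
  rw [Real.norm_of_nonneg (by positivity), Real.norm_of_nonneg (by positivity)]
  push_cast
  rw [hxk1]
  calc c ^ (k + 1) / Real.Gamma (x + a)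
      ≤ c ^ (k + 1) / (x * Real.Gamma x) := by
        apply div_le_div_of_nonneg_left (by positivity) (by positivity)
        calc x * Real.Gamma x = Real.Gamma (x + 1) := hG1.symm
        _ ≤ Real.Gamma (x + a) := hmono
    _ = (c / x) * (c ^ k / Real.Gamma x) := by rw [pow_succ]; field_simp
    _ ≤ (1/2) * (c ^ k / Real.Gamma x) := by
        apply mul_le_mul_of_nonneg_right _ (by positivity)
        rw [div_le_iff₀ hxpos]
        linarith

/-- Estimate for the Riemann–Liouville family associated with the perturbed fractional
cosine family: if `‖C(s)‖ ≤ M e^{ωs} E_α(b s^α)` then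
`‖T(t)‖ ≤ M e^{ωt} t^{α−1} E_{α,α}(b t^α)`. -/
theorem perturbed_riemannLiouville_bound {X : Type*} [NormedAddCommGroup X]
    [NormedSpace ℝ X] [CompleteSpace X]
    (α M ω b : ℝ) (hα1 : 1 < α) (hα2 : α ≤ 2) (hM : 1 ≤ M) (hω : 0 ≤ ω) (hb : 0 ≤ b)
    (C : ℝ → X →L[ℝ] X) (T : ℝ → X →L[ℝ] X)
    (hCcont : ∀ x : X, ContinuousOn (fun t => C t x) (Set.Ici 0))
    (hCbd : ∀ s : ℝ, 0 ≤ s →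
      ‖C s‖ ≤ M * Real.exp (ω * s) * ∑' k : ℕ, (b * s ^ α) ^ k / Real.Gamma ((k : ℝ) * α + 1))
    (hT : ∀ (t : ℝ) (x : X),
      T t x = ∫ s in (0:ℝ)..t, ((t - s) ^ (α - 2) / Real.Gamma (α - 1)) • C s x)
    (t : ℝ) (ht : 0 < t) :
    ‖T t‖ ≤ M * Real.exp (ω * t) * t ^ (α - 1) *
      ∑' k : ℕ, (b * t ^ α) ^ k / Real.Gamma ((k : ℝ) * α + α) := by
  have hα0 : (0:ℝ) < α - 1 := by linarith
  have hΓ : 0 < Real.Gamma (α - 1) := Real.Gamma_pos_of_pos hα0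
  have hG1pos : ∀ k : ℕ, 0 < Real.Gamma ((k : ℝ) * α + 1) := fun k =>
    Real.Gamma_pos_of_pos
      (add_pos_of_nonneg_of_pos (mul_nonneg (Nat.cast_nonneg k) (by linarith)) one_pos)
  have hG2pos : ∀ k : ℕ, 0 < Real.Gamma ((k : ℝ) * α + α) := fun k =>
    Real.Gamma_pos_of_pos
      (add_pos_of_nonneg_of_pos (mul_nonneg (Nat.cast_nonneg k) (by linarith)) (by linarith))
  have htα : (0:ℝ) ≤ t ^ α := Real.rpow_nonneg ht.le α
  set S : ℝ := ∑' k : ℕ, (b * t ^ α) ^ k / Real.Gamma ((k : ℝ) * α + α) with hSdef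
  have hSnn : 0 ≤ S :=
    tsum_nonneg fun k => div_nonneg (pow_nonneg (mul_nonneg hb htα) k) (hG2pos k).le
  refine ContinuousLinearMap.opNorm_le_bound _
    (mul_nonneg (mul_nonneg (mul_nonneg (by linarith) (Real.exp_pos _).le)
      (Real.rpow_nonneg ht.le _)) hSnn) fun x => ?_
  rw [hT]
  -- the series of integrands
  set term : ℕ → ℝ → ℝ := fun k s =>
    (t - s) ^ (α - 2) * ((b * s ^ α) ^ k / Real.Gamma ((k : ℝ) * α + 1)) with hterm
  have hmeas : ∀ k, Measurable (term k) := by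
    intro k
    simp only [hterm]
    fun_prop
  have hpow : ∀ s : ℝ, 0 ≤ s → ∀ k : ℕ, (b * s ^ α) ^ k = b ^ k * s ^ ((k : ℝ) * α) := by
    intro s hs k
    rw [mul_pow, ← Real.rpow_natCast (s ^ α) k, ← Real.rpow_mul hs, mul_comm α (k : ℝ)]
  have hterm_nn : ∀ k, ∀ s ∈ Set.Ioc (0:ℝ) t, 0 ≤ term k s := by
    intro k s hs
    exact mul_nonneg (Real.rpow_nonneg (by linarith [hs.2]) _)
      (div_nonneg (pow_nonneg (mul_nonneg hb (Real.rpow_nonneg hs.1.le α)) k) (hG1pos k).le)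
  have hsummable : ∀ s : ℝ, 0 ≤ s → Summable (fun k => term k s) := fun s hs =>
    (ml_summable hα1.le one_pos (mul_nonneg hb (Real.rpow_nonneg hs α))).mul_left _
  have hint : ∀ k, IntervalIntegrable (term k) volume 0 t := by
    intro k
    have h1 : IntervalIntegrable (fun s : ℝ => (t - s) ^ (α - 2)) volume 0 t := by
      have h0 := intervalIntegral.intervalIntegrable_rpow' (a := 0) (b := t)
        (r := α - 2) (by linarith)
      have h2 := h0.comp_sub_left t
      simpa using h2.symm
    apply h1.mul_continuousOn
    have hc : ContinuousOn (fun s : ℝ => s ^ α) (Set.uIcc 0 t) := fun s _ =>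
      (Real.continuousAt_rpow_const s α (Or.inr (by linarith))).continuousWithinAt
    exact ((continuousOn_const.mul hc).pow k).div_const _
  -- value of each integral
  set I : ℕ → ℝ := fun k =>
    Real.Gamma (α - 1) * (t ^ (α - 1) * ((b * t ^ α) ^ k / Real.Gamma ((k : ℝ) * α + α)))
    with hI
  have hInn : ∀ k, 0 ≤ I k := fun k =>
    mul_nonneg hΓ.le (mul_nonneg (Real.rpow_nonneg ht.le _)
      (div_nonneg (pow_nonneg (mul_nonneg hb htα) k) (hG2pos k).le))
  have hIv : ∀ k, ∫ s in (0:ℝ)..t, term k s = I k := by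
    intro k
    have hcong : ∀ s ∈ Set.uIcc (0:ℝ) t, term k s
        = (b ^ k / Real.Gamma ((k : ℝ) * α + 1)) *
          (s ^ (((k : ℝ) * α + 1) - 1) * (t - s) ^ ((α - 1) - 1)) := by
      intro s hs
      rw [Set.uIcc_of_le ht.le] at hs
      simp only [hterm]
      rw [hpow s hs.1 k]
      have e1 : ((k : ℝ) * α + 1) - 1 = (k : ℝ) * α := by ring
      have e2 : (α - 1) - 1 = α - 2 := by ring
      rw [e1, e2]; ring
    rw [intervalIntegral.integral_congr hcong, intervalIntegral.integral_const_mul,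
      realBetaScaled (add_pos_of_nonneg_of_pos (mul_nonneg (Nat.cast_nonneg k) (by linarith))
        one_pos) hα0 ht]
    have he1 : (k : ℝ) * α + 1 + (α - 1) - 1 = (k : ℝ) * α + (α - 1) := by ring
    have he2 : (k : ℝ) * α + 1 + (α - 1) = (k : ℝ) * α + α := by ring
    rw [he1, he2, Real.rpow_add ht]
    simp only [hI]
    rw [hpow t ht.le k]
    have h1 := (hG1pos k).ne'
    have h2 := (hG2pos k).ne'
    field_simp
  have hIsum : Summable I :=
    ((ml_summable hα1.le (by linarith) (mul_nonneg hb htα)).mul_left _).mul_left _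
  have hlint : ∀ k, ∫⁻ s in Set.Ioc (0:ℝ) t, ‖term k s‖ₑ = ENNReal.ofReal (I k) := by
    intro k
    rw [← ofReal_integral_norm_eq_lintegral_enorm ((hint k).1)]
    congr 1
    rw [← hIv k, intervalIntegral.integral_of_le ht.le]
    exact setIntegral_congr_fun measurableSet_Ioc fun s hs =>
      Real.norm_of_nonneg (hterm_nn k s hs)
  have hlsum : ∑' k : ℕ, ∫⁻ s in Set.Ioc (0:ℝ) t, ‖term k s‖ₑ = ENNReal.ofReal (∑' k, I k) := by
    simp_rw [hlint]
    exact (ENNReal.ofReal_tsum_of_nonneg hInn hIsum).symm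
  set F : ℝ → ℝ := fun s => ∑' k, term k s with hF
  have hFint_eq : ∫ s in Set.Ioc (0:ℝ) t, F s = ∑' k, I k := by
    simp only [hF]
    rw [MeasureTheory.integral_tsum (fun k => (hmeas k).aestronglyMeasurable)
      (by rw [hlsum]; exact ENNReal.ofReal_ne_top)]
    exact tsum_congr fun k => by rw [← intervalIntegral.integral_of_le ht.le]; exact hIv k
  -- integrability of F
  set Fm : ℝ → ℝ := fun s => (∑' k, ENNReal.ofReal (term k s)).toReal with hFm
  have hFm_meas : Measurable Fm :=
    (Measurable.ennreal_tsum fun k => (hmeas k).ennreal_ofReal).ennreal_toReal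
  have hae : Fm =ᵐ[volume.restrict (Set.Ioc (0:ℝ) t)] F := by
    filter_upwards [ae_restrict_mem measurableSet_Ioc] with s hs
    have hnn : ∀ k, 0 ≤ term k s := fun k => hterm_nn k s hs
    simp only [hFm, hF]
    rw [← ENNReal.ofReal_tsum_of_nonneg hnn (hsummable s hs.1.le),
      ENNReal.toReal_ofReal (tsum_nonneg hnn)]
  have hFm_int : Integrable Fm (volume.restrict (Set.Ioc (0:ℝ) t)) := by
    refine ⟨hFm_meas.aestronglyMeasurable, ?_⟩
    show (∫⁻ s in Set.Ioc (0:ℝ) t, ‖Fm s‖ₑ) < ⊤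
    calc ∫⁻ s in Set.Ioc (0:ℝ) t, ‖Fm s‖ₑ
        ≤ ∫⁻ s in Set.Ioc (0:ℝ) t, ∑' k, ENNReal.ofReal (term k s) := by
          apply lintegral_mono
          intro s
          simp only [hFm]
          rw [Real.enorm_eq_ofReal ENNReal.toReal_nonneg]
          exact ENNReal.ofReal_toReal_le
      _ = ∑' k, ∫⁻ s in Set.Ioc (0:ℝ) t, ENNReal.ofReal (term k s) :=
          lintegral_tsum fun k => ((hmeas k).ennreal_ofReal).aemeasurable
      _ ≤ ∑' k, ∫⁻ s in Set.Ioc (0:ℝ) t, ‖term k s‖ₑ :=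
          ENNReal.tsum_le_tsum fun k => lintegral_mono fun s => Real.ofReal_le_enorm _
      _ = ENNReal.ofReal (∑' k, I k) := hlsum
      _ < ⊤ := ENNReal.ofReal_lt_top
  have hF_int : IntegrableOn F (Set.Ioc (0:ℝ) t) := hFm_int.congr hae
  have hF_ii : IntervalIntegrable F volume 0 t :=
    ⟨hF_int, by rw [Set.Ioc_eq_empty (not_lt.mpr ht.le)]; exact integrableOn_empty⟩
  set K : ℝ := M * Real.exp (ω * t) * ‖x‖ / Real.Gamma (α - 1) with hK
  have hKnn : 0 ≤ K := by positivity
  have hg_ii : IntervalIntegrable (fun s => K * F s) volume 0 t := hF_ii.const_mul K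
  have hbound_ae : ∀ᵐ s ∂volume.restrict (Set.uIoc 0 t),
      ‖((t - s) ^ (α - 2) / Real.Gamma (α - 1)) • C s x‖ ≤ K * F s := by
    rw [Set.uIoc_of_le ht.le]
    filter_upwards [ae_restrict_mem measurableSet_Ioc] with s hs
    have hs0 : (0:ℝ) ≤ s := hs.1.le
    have hts : (0:ℝ) ≤ t - s := by linarith [hs.2]
    have hcoef : 0 ≤ (t - s) ^ (α - 2) / Real.Gamma (α - 1) :=
      div_nonneg (Real.rpow_nonneg hts _) hΓ.le
    have hS1nn : 0 ≤ ∑' k : ℕ, (b * s ^ α) ^ k / Real.Gamma ((k : ℝ) * α + 1) :=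
      tsum_nonneg fun k =>
        div_nonneg (pow_nonneg (mul_nonneg hb (Real.rpow_nonneg hs0 α)) k) (hG1pos k).le
    have h1 : ‖C s x‖ ≤ M * Real.exp (ω * t) *
        (∑' k : ℕ, (b * s ^ α) ^ k / Real.Gamma ((k : ℝ) * α + 1)) * ‖x‖ := by
      calc ‖C s x‖ ≤ ‖C s‖ * ‖x‖ := (C s).le_opNorm x
        _ ≤ (M * Real.exp (ω * s) *
              ∑' k : ℕ, (b * s ^ α) ^ k / Real.Gamma ((k : ℝ) * α + 1)) * ‖x‖ :=
            mul_le_mul_of_nonneg_right (hCbd s hs0) (norm_nonneg x)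
        _ ≤ _ := by
            apply mul_le_mul_of_nonneg_right _ (norm_nonneg x)
            apply mul_le_mul_of_nonneg_right _ hS1nn
            exact mul_le_mul_of_nonneg_left
              (Real.exp_le_exp.2 (mul_le_mul_of_nonneg_left hs.2 hω)) (by linarith)
    have hFs : F s = (t - s) ^ (α - 2) *
        ∑' k : ℕ, (b * s ^ α) ^ k / Real.Gamma ((k : ℝ) * α + 1) := by
      simp only [hF, hterm]
      exact tsum_mul_left
    calc ‖((t - s) ^ (α - 2) / Real.Gamma (α - 1)) • C s x‖
        = ((t - s) ^ (α - 2) / Real.Gamma (α - 1)) * ‖C s x‖ := by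
          rw [norm_smul, Real.norm_of_nonneg hcoef]
      _ ≤ ((t - s) ^ (α - 2) / Real.Gamma (α - 1)) * (M * Real.exp (ω * t) *
            (∑' k : ℕ, (b * s ^ α) ^ k / Real.Gamma ((k : ℝ) * α + 1)) * ‖x‖) :=
          mul_le_mul_of_nonneg_left h1 hcoef
      _ = K * F s := by rw [hFs, hK]; field_simp
  have hIsum_eq : ∑' k, I k = Real.Gamma (α - 1) * (t ^ (α - 1) * S) := by
    simp only [hI]
    rw [tsum_mul_left, tsum_mul_left, hSdef]
  calc ‖∫ s in (0:ℝ)..t, ((t - s) ^ (α - 2) / Real.Gamma (α - 1)) • C s x‖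
      ≤ |∫ s in (0:ℝ)..t, K * F s| :=
        intervalIntegral.norm_integral_le_abs_of_norm_le hbound_ae hg_ii
    _ = |K * ∑' k, I k| := by
        rw [intervalIntegral.integral_const_mul, intervalIntegral.integral_of_le ht.le,
          hFint_eq]
    _ = K * ∑' k, I k := abs_of_nonneg (mul_nonneg hKnn (tsum_nonneg hInn))
    _ = M * Real.exp (ω * t) * t ^ (α - 1) * S * ‖x‖ := by
        rw [hIsum_eq, hK]; field_simp
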